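/- For indivisible items with two agents and m ≤ 4 items, there exists a mechanism that is truthful for chores and EF1 for chores. -/

import Mathlib

open Finset

noncomputable section

/-- Total cost of a bundle `S` under an additive item-value function `c`. -/
def costOf {m : ℕ} (c : Fin m → ℝ) (S : Finset (Fin m)) : ℝ := ∑ o ∈ S, c o

/-- `A` is an (ordered) partition of the item set into the two agents' bundles. -/
def IsAlloc {m : ℕ} (A : Fin 2 → Finset (Fin m)) : Prop :=
  Disjoint (A 0) (A 1) ∧ A 0 ∪ A 1 = Finset.univ

/-- A profile of additive item-value functions with nonnegative values. -/
def NonnegProfile {m : ℕ} (c : Fin 2 → Fin m → ℝ) : Prop := ∀ i o, 0 ≤ c i o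

/-- `M` is truthful for chores: no agent can strictly decrease his cost by misreporting. -/
def TruthfulChores {m : ℕ} (M : (Fin 2 → Fin m → ℝ) → Fin 2 → Finset (Fin m)) : Prop :=
  ∀ c : Fin 2 → Fin m → ℝ, NonnegProfile c → ∀ (i : Fin 2) (c' : Fin m → ℝ), (∀ o, 0 ≤ c' o) →
    costOf (c i) (M c i) ≤ costOf (c i) (M (Function.update c i c') i)

/-- Allocation `A` is envy-free up to one item for chores w.r.t. cost profile `c`. -/
def EF1Chores {m : ℕ} (c : Fin 2 → Fin m → ℝ) (A : Fin 2 → Finset (Fin m)) : Prop :=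
  ∀ i j : Fin 2, A i ≠ ∅ → ∃ o ∈ A i, costOf (c i) ((A i).erase o) ≤ costOf (c i) (A j)

lemma costOf_pair {m : ℕ} {c : Fin m → ℝ} {a b : Fin m} (h : a ≠ b) :
    costOf c {a, b} = c a + c b := Finset.sum_pair h

lemma costOf_singleton {m : ℕ} (c : Fin m → ℝ) (a : Fin m) :
    costOf c {a} = c a := Finset.sum_singleton _ _

lemma costOf_nonneg {m : ℕ} {c : Fin m → ℝ} (hc : ∀ o, 0 ≤ c o) (S : Finset (Fin m)) :
    0 ≤ costOf c S := Finset.sum_nonneg fun o _ => hc o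

lemma pair_erase_right {m : ℕ} {a b : Fin m} (h : a ≠ b) :
    ({a, b} : Finset (Fin m)).erase b = {a} := by
  rw [Finset.erase_insert_of_ne h, Finset.erase_singleton]
  simp

lemma pair_erase_left {m : ℕ} {a b : Fin m} (h : a ≠ b) :
    ({a, b} : Finset (Fin m)).erase a = {b} :=
  Finset.erase_insert (by simpa using h)

/-- EF1 helper: pair bundle vs pair bundle, when the kept item `x` costs at most `x'`. -/
lemma ef1_pair_pair {m : ℕ} {c : Fin m → ℝ} (hc : ∀ o, 0 ≤ c o) {x y x' y' : Fin m}
    (hxy : x ≠ y) (hx'y' : x' ≠ y') (h : c x ≤ c x') :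
    ∃ o ∈ ({x, y} : Finset (Fin m)),
      costOf c (({x, y} : Finset (Fin m)).erase o) ≤ costOf c {x', y'} := by
  refine ⟨y, by simp, ?_⟩
  rw [pair_erase_right hxy, costOf_singleton, costOf_pair hx'y']
  linarith [hc y']

/-- EF1 helper: pair bundle vs pair bundle, when the kept item `x` costs at most `y'`. -/
lemma ef1_pair_pair' {m : ℕ} {c : Fin m → ℝ} (hc : ∀ o, 0 ≤ c o) {x y x' y' : Fin m}
    (hxy : x ≠ y) (hx'y' : x' ≠ y') (h : c x ≤ c y') :
    ∃ o ∈ ({x, y} : Finset (Fin m)),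
      costOf c (({x, y} : Finset (Fin m)).erase o) ≤ costOf c {x', y'} := by
  refine ⟨y, by simp, ?_⟩
  rw [pair_erase_right hxy, costOf_singleton, costOf_pair hx'y']
  linarith [hc x']

/-- EF1 helper: pair bundle vs singleton bundle. -/
lemma ef1_pair_single {m : ℕ} {c : Fin m → ℝ} {x y x' : Fin m}
    (hxy : x ≠ y) (h : c x ≤ c x') :
    ∃ o ∈ ({x, y} : Finset (Fin m)),
      costOf c (({x, y} : Finset (Fin m)).erase o) ≤ costOf c {x'} := by
  refine ⟨y, by simp, ?_⟩
  rw [pair_erase_right hxy, costOf_singleton, costOf_singleton]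
  exact h

/-- EF1 helper: comparing a pair bundle with itself. -/
lemma ef1_pair_self {m : ℕ} {c : Fin m → ℝ} (hc : ∀ o, 0 ≤ c o) {x y : Fin m}
    (hxy : x ≠ y) :
    ∃ o ∈ ({x, y} : Finset (Fin m)),
      costOf c (({x, y} : Finset (Fin m)).erase o) ≤ costOf c {x, y} := by
  refine ⟨x, by simp, ?_⟩
  rw [pair_erase_left hxy, costOf_singleton, costOf_pair hxy]
  linarith [hc x]

/-- EF1 helper: singleton bundle vs anything. -/
lemma ef1_single {m : ℕ} {c : Fin m → ℝ} (hc : ∀ o, 0 ≤ c o) (x : Fin m) (B : Finset (Fin m)) :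
    ∃ o ∈ ({x} : Finset (Fin m)),
      costOf c (({x} : Finset (Fin m)).erase o) ≤ costOf c B := by
  refine ⟨x, by simp, ?_⟩
  rw [Finset.erase_singleton]
  have : costOf c (∅ : Finset (Fin m)) = 0 := rfl
  rw [this]
  exact costOf_nonneg hc B

/-- For two agents and at most four indivisible items, there exists a truthful and EF1
mechanism for chores. -/
theorem exists_truthful_ef1_chores {m : ℕ} (hm : m ≤ 4) :
    ∃ M : (Fin 2 → Fin m → ℝ) → Fin 2 → Finset (Fin m),
      (∀ c, NonnegProfile c → IsAlloc (M c)) ∧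
      TruthfulChores M ∧
      (∀ c, NonnegProfile c → EF1Chores c (M c)) := by
  interval_cases m
  · -- m = 0
    refine ⟨fun _ => ![∅, ∅], ?_, ?_, ?_⟩
    · intro c _
      constructor
      · show Disjoint (∅ : Finset (Fin 0)) ∅; simp
      · show (∅ : Finset (Fin 0)) ∪ ∅ = Finset.univ; decide
    · intro c _ i c' _
      fin_cases i <;> simp
    · intro c _ i j hi
      fin_cases i <;> simp at hi
  · -- m = 1
    refine ⟨fun _ => ![{0}, ∅], ?_, ?_, ?_⟩
    · intro c _
      constructor
      · show Disjoint ({0} : Finset (Fin 1)) ∅; simp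
      · show ({0} : Finset (Fin 1)) ∪ ∅ = Finset.univ; decide
    · intro c _ i c' _
      fin_cases i <;> simp
    · intro c hc i j hi
      fin_cases i
      · fin_cases j <;> exact ef1_single (hc 0) 0 _
      · simp at hi
  · -- m = 2
    refine ⟨fun _ => ![{0}, {1}], ?_, ?_, ?_⟩
    · intro c _
      constructor
      · show Disjoint ({0} : Finset (Fin 2)) {1}; decide
      · show ({0} : Finset (Fin 2)) ∪ {1} = Finset.univ; decide
    · intro c _ i c' _
      fin_cases i <;> simp
    · intro c hc i j hi
      fin_cases i
      · fin_cases j <;> exact ef1_single (hc 0) 0 _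
      · fin_cases j <;> exact ef1_single (hc 1) 1 _
  · -- m = 3 : agent 0 gets her cheaper item among {0,1} plus item 2; agent 1 gets the other
    refine ⟨fun c => ![{if c 0 0 ≤ c 0 1 then 0 else 1, 2},
                       {if c 0 0 ≤ c 0 1 then 1 else 0}], ?_, ?_, ?_⟩
    · intro c _
      constructor
      · show Disjoint ({if c 0 0 ≤ c 0 1 then 0 else 1, 2} : Finset (Fin 3))
          {if c 0 0 ≤ c 0 1 then 1 else 0}
        split_ifs <;> decide
      · show ({if c 0 0 ≤ c 0 1 then 0 else 1, 2} : Finset (Fin 3)) ∪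
          {if c 0 0 ≤ c 0 1 then 1 else 0} = Finset.univ
        split_ifs <;> decide
    · intro c _ i c' _
      fin_cases i
      · simp only [Fin.zero_eta, Fin.mk_one, Matrix.cons_val_zero, Function.update_self,
          Function.update_of_ne (by decide : (1 : Fin 2) ≠ 0)]
        split_ifs with h1 h2 <;>
          simp only [costOf_pair (by decide : (0 : Fin 3) ≠ 2),
            costOf_pair (by decide : (1 : Fin 3) ≠ 2)] <;> linarith
      · simp only [Fin.zero_eta, Fin.mk_one, Matrix.cons_val_one, Matrix.head_cons,
          Function.update_of_ne (by decide : (0 : Fin 2) ≠ 1)]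
        exact le_rfl
    · intro c hc i j hi
      fin_cases i <;> fin_cases j <;>
        simp only [Fin.zero_eta, Fin.mk_one, Matrix.cons_val_zero, Matrix.cons_val_one, Matrix.head_cons] at hi ⊢
      · split_ifs with h
        · exact ef1_pair_self (hc 0) (by decide)
        · exact ef1_pair_self (hc 0) (by decide)
      · split_ifs with h
        · exact ef1_pair_single (by decide) h
        · exact ef1_pair_single (by decide) (le_of_not_ge h)
      · split_ifs <;> exact ef1_single (hc 1) _ _
      · split_ifs <;> exact ef1_single (hc 1) _ _
  · -- m = 4 : agent 0 keeps her cheaper of {0,1}, agent 1 keeps his cheaper of {2,3};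
    -- each passes the other item of his pair to the other agent.
    refine ⟨fun c => ![{if c 0 0 ≤ c 0 1 then 0 else 1, if c 1 2 ≤ c 1 3 then 3 else 2},
                       {if c 1 2 ≤ c 1 3 then 2 else 3, if c 0 0 ≤ c 0 1 then 1 else 0}],
            ?_, ?_, ?_⟩
    · intro c _
      constructor
      · show Disjoint
          ({if c 0 0 ≤ c 0 1 then 0 else 1, if c 1 2 ≤ c 1 3 then 3 else 2} : Finset (Fin 4))
          {if c 1 2 ≤ c 1 3 then 2 else 3, if c 0 0 ≤ c 0 1 then 1 else 0}
        split_ifs <;> decide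
      · show ({if c 0 0 ≤ c 0 1 then 0 else 1, if c 1 2 ≤ c 1 3 then 3 else 2} : Finset (Fin 4)) ∪
          {if c 1 2 ≤ c 1 3 then 2 else 3, if c 0 0 ≤ c 0 1 then 1 else 0} = Finset.univ
        split_ifs <;> decide
    · intro c _ i c' _
      fin_cases i
      · simp only [Fin.zero_eta, Fin.mk_one, Matrix.cons_val_zero, Function.update_self,
          Function.update_of_ne (by decide : (1 : Fin 2) ≠ 0)]
        split_ifs with h1 h2 <;>
          simp only [costOf_pair (by decide : (0 : Fin 4) ≠ 3),
            costOf_pair (by decide : (0 : Fin 4) ≠ 2),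
            costOf_pair (by decide : (1 : Fin 4) ≠ 3),
            costOf_pair (by decide : (1 : Fin 4) ≠ 2)] <;> linarith
      · simp only [Fin.zero_eta, Fin.mk_one, Matrix.cons_val_one, Matrix.head_cons, Function.update_self,
          Function.update_of_ne (by decide : (0 : Fin 2) ≠ 1), Matrix.cons_val_zero]
        split_ifs with h1 h2 <;>
          simp only [costOf_pair (by decide : (2 : Fin 4) ≠ 1),
            costOf_pair (by decide : (2 : Fin 4) ≠ 0),
            costOf_pair (by decide : (3 : Fin 4) ≠ 1),
            costOf_pair (by decide : (3 : Fin 4) ≠ 0)] <;> linarith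
    · intro c hc i j hi
      fin_cases i <;> fin_cases j <;>
        simp only [Fin.zero_eta, Fin.mk_one, Matrix.cons_val_zero, Matrix.cons_val_one, Matrix.head_cons] at hi ⊢
      · split_ifs <;> exact ef1_pair_self (hc 0) (by decide)
      · split_ifs with h1 h2 <;>
          [exact ef1_pair_pair' (hc 0) (by decide) (by decide) h1;
           exact ef1_pair_pair' (hc 0) (by decide) (by decide) h1;
           exact ef1_pair_pair' (hc 0) (by decide) (by decide) (le_of_not_ge h1);
           exact ef1_pair_pair' (hc 0) (by decide) (by decide) (le_of_not_ge h1)]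
      · split_ifs with h1 h2 <;>
          [exact ef1_pair_pair' (hc 1) (by decide) (by decide) h1;
           exact ef1_pair_pair' (hc 1) (by decide) (by decide) h1;
           exact ef1_pair_pair' (hc 1) (by decide) (by decide) (le_of_not_ge h1);
           exact ef1_pair_pair' (hc 1) (by decide) (by decide) (le_of_not_ge h1)]
      · split_ifs <;> exact ef1_pair_self (hc 1) (by decide)
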